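/- Let T : ℝ₊^N → ℝ₊₊^N be a convex standard interference mapping (continuous, each coordinate function convex, monotone, and scalable). For each x ∈ ℝ₊^N the function t ↦ T(tx)/t is coordinatewise nonincreasing on (0,∞), so the asymptotic mapping S(x) := lim_{t→∞} T(tx)/t exists in ℝ₊^N. Then T is contractive (i.e., there exist v ∈ ℝ₊₊^N and c ∈ [0,1) with T(x+εv) ≤ T(x) + cεv for all x ∈ ℝ₊^N and ε > 0) if and only if ρ(S) < 1, where ρ(S) := sup{λ ≥ 0 : S(x) = λx for some x ∈ ℝ₊^N \ {0}}. -/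

import Mathlib

open Filter Topology

set_option maxHeartbeats 2000000 in
theorem stmt_10 (N : ℕ) (hN : 1 ≤ N)
    (T : (Fin N → ℝ) → (Fin N → ℝ))
    (hT_pos : ∀ x : Fin N → ℝ, (∀ i, 0 ≤ x i) → ∀ i, 0 < T x i)
    (hT_cont : ContinuousOn T {x : Fin N → ℝ | ∀ i, 0 ≤ x i})
    (hT_conv : ∀ i : Fin N, ConvexOn ℝ {x : Fin N → ℝ | ∀ j, 0 ≤ x j} (fun x => T x i))
    (hT_mono : ∀ x y : Fin N → ℝ, (∀ i, 0 ≤ x i) → (∀ i, 0 ≤ y i) → x ≤ y → T x ≤ T y)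
    (hT_scal : ∀ α : ℝ, 1 < α → ∀ x : Fin N → ℝ, (∀ i, 0 ≤ x i) →
      ∀ i : Fin N, T (α • x) i < α * T x i)
    (S : (Fin N → ℝ) → (Fin N → ℝ))
    (hS : ∀ x : Fin N → ℝ, (∀ i, 0 ≤ x i) →
      Tendsto (fun t : ℝ => t⁻¹ • T (t • x)) atTop (𝓝 (S x))) :
    (∀ x : Fin N → ℝ, (∀ i, 0 ≤ x i) → ∀ i : Fin N,
      AntitoneOn (fun t : ℝ => T (t • x) i / t) (Set.Ioi (0 : ℝ))) ∧
    ((∃ (v : Fin N → ℝ) (c : ℝ), (∀ i, 0 < v i) ∧ 0 ≤ c ∧ c < 1 ∧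
        ∀ x : Fin N → ℝ, (∀ i, 0 ≤ x i) → ∀ ε : ℝ, 0 < ε →
          ∀ i : Fin N, T (x + ε • v) i ≤ T x i + c * ε * v i) ↔
      sSup {lam : ℝ | 0 ≤ lam ∧
        ∃ u : Fin N → ℝ, (∀ i, 0 ≤ u i) ∧ u ≠ 0 ∧ S u = lam • u} < 1) := by
  classical
  haveI hFin : Nonempty (Fin N) := ⟨⟨0, hN⟩⟩
  have hne : (Finset.univ : Finset (Fin N)).Nonempty := Finset.univ_nonempty
  -- coordinatewise limits
  have hSi : ∀ x : Fin N → ℝ, (∀ i, 0 ≤ x i) → ∀ i,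
      Tendsto (fun t : ℝ => t⁻¹ * T (t • x) i) atTop (𝓝 (S x i)) := by
    intro x hx i
    have := hS x hx
    rw [tendsto_pi_nhds] at this
    simpa using this i
  -- scalar multiples stay in the cone
  have hsm : ∀ (t : ℝ), 0 ≤ t → ∀ x : Fin N → ℝ, (∀ i, 0 ≤ x i) → ∀ i, 0 ≤ (t • x) i := by
    intro t ht x hx i
    simpa using mul_nonneg ht (hx i)
  -- Part 1: antitone
  have part1 : ∀ x : Fin N → ℝ, (∀ i, 0 ≤ x i) → ∀ i : Fin N,
      AntitoneOn (fun t : ℝ => T (t • x) i / t) (Set.Ioi (0 : ℝ)) := by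
    intro x hx i t1 ht1 t2 ht2 h12
    simp only [Set.mem_Ioi] at ht1 ht2
    rcases eq_or_lt_of_le h12 with rfl | hlt
    · exact le_refl _
    · have hα : 1 < t2 / t1 := (one_lt_div ht1).mpr hlt
      have hkey := hT_scal (t2 / t1) hα (t1 • x) (hsm t1 ht1.le x hx) i
      have hsmul : (t2 / t1) • (t1 • x) = t2 • x := by
        rw [smul_smul, div_mul_cancel₀ _ (ne_of_gt ht1)]
      rw [hsmul] at hkey
      rw [div_le_div_iff₀ ht2 ht1]
      calc T (t2 • x) i * t1 ≤ (t2 / t1 * T (t1 • x) i) * t1 := by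
            exact mul_le_mul_of_nonneg_right hkey.le ht1.le
        _ = T (t1 • x) i * t2 := by field_simp
  -- S is nonnegative
  have hSnn : ∀ x : Fin N → ℝ, (∀ i, 0 ≤ x i) → ∀ i, 0 ≤ S x i := by
    intro x hx i
    refine le_of_tendsto_of_tendsto tendsto_const_nhds (hSi x hx i) ?_
    filter_upwards [eventually_ge_atTop (1:ℝ)] with t ht
    have := (hT_pos (t • x) (hsm t (by linarith) x hx) i).le
    have h0 : (0:ℝ) ≤ t⁻¹ := by positivity
    exact mul_nonneg h0 this
  -- S monotone
  have hSmono : ∀ x y : Fin N → ℝ, (∀ i, 0 ≤ x i) → (∀ i, 0 ≤ y i) → (∀ i, x i ≤ y i) →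
      ∀ i, S x i ≤ S y i := by
    intro x y hx hy hxy i
    refine le_of_tendsto_of_tendsto (hSi x hx i) (hSi y hy i) ?_
    filter_upwards [eventually_ge_atTop (0:ℝ)] with t ht
    have hmono := hT_mono (t • x) (t • y) (hsm t ht x hx) (hsm t ht y hy)
      (fun i => by simpa using mul_le_mul_of_nonneg_left (hxy i) ht)
    have h0 : (0:ℝ) ≤ t⁻¹ := by positivity
    exact mul_le_mul_of_nonneg_left (hmono i) h0
  -- S positively homogeneous
  have hShom : ∀ s : ℝ, 0 < s → ∀ x : Fin N → ℝ, (∀ i, 0 ≤ x i) → S (s • x) = s • S x := by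
    intro s hs x hx
    have h1 : Tendsto (fun t : ℝ => t⁻¹ • T (t • s • x)) atTop (𝓝 (S (s • x))) :=
      hS (s • x) (hsm s hs.le x hx)
    have h2 : Tendsto (fun t : ℝ => t⁻¹ • T (t • s • x)) atTop (𝓝 (s • S x)) := by
      have hts : Tendsto (fun t : ℝ => t * s) atTop atTop :=
        Tendsto.atTop_mul_const hs tendsto_id
      have := ((hS x hx).comp hts).const_smul s
      refine this.congr' ?_
      filter_upwards [eventually_gt_atTop (0:ℝ)] with t ht
      show s • ((t * s)⁻¹ • T ((t * s) • x)) = t⁻¹ • T (t • s • x)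
      have hx1 : (t * s) • x = t • s • x := by rw [smul_smul]
      rw [hx1, smul_smul]
      congr 1
      rw [mul_inv]
      field_simp [mul_comm]
    exact tendsto_nhds_unique h1 h2
  -- S subadditive
  have hSsub : ∀ x y : Fin N → ℝ, (∀ i, 0 ≤ x i) → (∀ i, 0 ≤ y i) →
      ∀ i, S (x + y) i ≤ S x i + S y i := by
    intro x y hx hy i
    have hxy : ∀ i, 0 ≤ (x + y) i := fun i => add_nonneg (hx i) (hy i)
    have hlim2 : Tendsto (fun t : ℝ => (2*t)⁻¹ * T ((2*t) • x) i + (2*t)⁻¹ * T ((2*t) • y) i)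
        atTop (𝓝 (S x i + S y i)) := by
      have h2t : Tendsto (fun t : ℝ => 2 * t) atTop atTop :=
        (tendsto_id (α := ℝ)).const_mul_atTop (by norm_num)
      exact ((hSi x hx i).comp h2t).add ((hSi y hy i).comp h2t)
    refine le_of_tendsto_of_tendsto (hSi (x + y) hxy i) hlim2 ?_
    filter_upwards [eventually_gt_atTop (0:ℝ)] with t ht
    have hconv := (hT_conv i).2 (x := (2*t) • x) (y := (2*t) • y)
      (hsm (2*t) (by linarith) x hx) (hsm (2*t) (by linarith) y hy)
      (by norm_num : (0:ℝ) ≤ 1/2) (by norm_num : (0:ℝ) ≤ 1/2) (by norm_num)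
    have hpt : (1/2 : ℝ) • ((2*t) • x) + (1/2 : ℝ) • ((2*t) • y) = t • (x + y) := by
      rw [smul_smul, smul_smul, smul_add, show (1/2:ℝ)*(2*t) = t by ring]
    rw [hpt] at hconv
    simp only [smul_eq_mul] at hconv
    have h0 : (0:ℝ) ≤ t⁻¹ := by positivity
    calc t⁻¹ * T (t • (x+y)) i ≤ t⁻¹ * ((1/2) * T ((2*t) • x) i + (1/2) * T ((2*t) • y) i) := by
          exact mul_le_mul_of_nonneg_left hconv h0
      _ = (2*t)⁻¹ * T ((2*t) • x) i + (2*t)⁻¹ * T ((2*t) • y) i := by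
          rw [mul_inv]; ring
  -- recession inequality: T (x + y) ≤ T x + S y
  have hrec : ∀ x y : Fin N → ℝ, (∀ i, 0 ≤ x i) → (∀ i, 0 ≤ y i) →
      ∀ i, T (x + y) i ≤ T x i + S y i := by
    intro x y hx hy i
    have hcoef : Tendsto (fun t : ℝ => 1 - t⁻¹) atTop (𝓝 1) := by
      have h := (tendsto_const_nhds (x := (1:ℝ)) (f := atTop)).sub tendsto_inv_atTop_zero
      simpa using h
    have hcoef' : Tendsto (fun t : ℝ => (1 - t⁻¹)⁻¹) atTop (𝓝 1) := by
      simpa using hcoef.inv₀ one_ne_zero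
    have hpath : Tendsto (fun t : ℝ => (1 - t⁻¹)⁻¹ • x) atTop (𝓝 x) := by
      simpa using hcoef'.smul_const x
    have hpos : ∀ t : ℝ, 1 < t → 0 < 1 - t⁻¹ := by
      intro t ht
      have h0 : (0:ℝ) < t := by linarith
      have : t⁻¹ < 1 := by
        have := (div_lt_one h0).mpr ht
        simpa [one_div] using this
      linarith
    have hmem : ∀ᶠ t : ℝ in atTop, (1 - t⁻¹)⁻¹ • x ∈ {z : Fin N → ℝ | ∀ j, 0 ≤ z j} := by
      filter_upwards [eventually_gt_atTop (1:ℝ)] with t ht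
      exact hsm _ (inv_nonneg.mpr (hpos t ht).le) x hx
    have hTx : Tendsto (fun t : ℝ => T ((1 - t⁻¹)⁻¹ • x) i) atTop (𝓝 (T x i)) := by
      have hcw : Tendsto T (𝓝[{z : Fin N → ℝ | ∀ j, 0 ≤ z j}] x) (𝓝 (T x)) :=
        (hT_cont x hx).tendsto
      have hcomp := hcw.comp (tendsto_nhdsWithin_iff.mpr ⟨hpath, hmem⟩)
      have := tendsto_pi_nhds.mp hcomp i
      simpa [Function.comp] using this
    have hg : Tendsto (fun t : ℝ => t⁻¹ * T (t • y) i + (1 - t⁻¹) * T ((1 - t⁻¹)⁻¹ • x) i)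
        atTop (𝓝 (S y i + T x i)) := by
      have := (hSi y hy i).add (hcoef.mul hTx)
      simpa using this
    have hmain : T (x + y) i ≤ S y i + T x i := by
      refine le_of_tendsto_of_tendsto tendsto_const_nhds hg ?_
      filter_upwards [eventually_gt_atTop (1:ℝ)] with t ht
      have h1 : 0 < 1 - t⁻¹ := hpos t ht
      have ht0 : (0:ℝ) < t := by linarith
      have hconv := (hT_conv i).2 (hsm t ht0.le y hy)
        (hsm _ (inv_nonneg.mpr h1.le) x hx)
        (inv_nonneg.mpr ht0.le) h1.le (by ring)
      have hpt : t⁻¹ • (t • y) + (1 - t⁻¹) • ((1 - t⁻¹)⁻¹ • x) = x + y := by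
        rw [smul_smul, smul_smul, inv_mul_cancel₀ (ne_of_gt ht0),
          mul_inv_cancel₀ (ne_of_gt h1), one_smul, one_smul]
        exact add_comm y x
      rw [hpt] at hconv
      simpa only [smul_eq_mul] using hconv
    linarith
  -- Lipschitz-type bound
  have hone : ∀ i, (0:ℝ) ≤ (fun _ : Fin N => (1:ℝ)) i := fun _ => zero_le_one
  have hLip : ∀ y z : Fin N → ℝ, (∀ i, 0 ≤ y i) → (∀ i, 0 ≤ z i) → ∀ m : ℝ, 0 ≤ m →
      (∀ i, y i ≤ z i + m) → ∀ i, S y i ≤ S z i + m * S (fun _ => 1) i := by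
    intro y z hy hz m hm hyz i
    rcases eq_or_lt_of_le hm with rfl | hm'
    · have := hSmono y z hy hz (fun j => by simpa using hyz j) i
      simpa using this
    · have hme : ∀ j, 0 ≤ (m • (fun _ : Fin N => (1:ℝ))) j := fun j => by
        simpa using hm
      have h1 : S y i ≤ S (z + m • (fun _ : Fin N => (1:ℝ))) i := by
        refine hSmono _ _ hy (fun j => add_nonneg (hz j) (hme j)) (fun j => ?_) i
        simpa using hyz j
      have h2 := hSsub z (m • fun _ : Fin N => (1:ℝ)) hz hme i
      have h3 : S (m • fun _ : Fin N => (1:ℝ)) i = m * S (fun _ => 1) i := by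
        rw [hShom m hm' _ hone]; simp
      linarith
  -- bound constant
  set Ms : ℝ := ∑ j, S (fun _ : Fin N => (1:ℝ)) j with hMsdef
  have hMs : ∀ i, S (fun _ : Fin N => (1:ℝ)) i ≤ Ms := fun i =>
    Finset.single_le_sum (fun j _ => hSnn _ hone j) (Finset.mem_univ i)
  have hMs0 : 0 ≤ Ms := Finset.sum_nonneg fun j _ => hSnn _ hone j
  -- an eigenvalue is dominated by any positive sub-eigenpair ratio
  have hEig_le : ∀ (lam : ℝ) (u : Fin N → ℝ), (∀ i, 0 ≤ u i) → u ≠ 0 → S u = lam • u →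
      ∀ (v : Fin N → ℝ) (c : ℝ), (∀ i, 0 < v i) → (∀ i, S v i ≤ c * v i) → lam ≤ c := by
    intro lam u hu hune hueq v c hv hvc
    obtain ⟨i0, _, hi0⟩ := Finset.exists_max_image Finset.univ (fun i => u i / v i) hne
    set m := u i0 / v i0 with hm
    have hj : ∃ j, 0 < u j := by
      by_contra h; push_neg at h
      exact hune (funext fun j => le_antisymm (h j) (hu j))
    obtain ⟨j, hj⟩ := hj
    have hm0 : 0 < m := lt_of_lt_of_le (div_pos hj (hv j)) (hi0 j (Finset.mem_univ j))
    have humv : ∀ k, u k ≤ m * v k := fun k =>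
      (div_le_iff₀ (hv k)).mp (hi0 k (Finset.mem_univ k))
    have h1 : S u i0 ≤ m * S v i0 := by
      have hmv : ∀ k, 0 ≤ (m • v) k := fun k => by
        simpa using (mul_nonneg hm0.le (hv k).le)
      have := hSmono u (m • v) hu hmv (fun k => by simpa using humv k) i0
      rw [hShom m hm0 v (fun k => (hv k).le)] at this
      simpa using this
    have h2 : lam * u i0 = S u i0 := by rw [hueq]; simp
    have hui0 : u i0 = m * v i0 := by
      rw [hm, div_mul_cancel₀ _ (ne_of_gt (hv i0))]
    have h3 : m * S v i0 ≤ m * (c * v i0) := mul_le_mul_of_nonneg_left (hvc i0) hm0.le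
    have hmv0 : 0 < m * v i0 := mul_pos hm0 (hv i0)
    have hfin : lam * (m * v i0) ≤ c * (m * v i0) := by
      calc lam * (m * v i0) = lam * u i0 := by rw [← hui0]
        _ = S u i0 := h2
        _ ≤ m * (c * v i0) := le_trans h1 h3
        _ = c * (m * v i0) := by ring
    exact le_of_mul_le_mul_right hfin hmv0
  have hEbdd : BddAbove {lam : ℝ | 0 ≤ lam ∧
      ∃ u : Fin N → ℝ, (∀ i, 0 ≤ u i) ∧ u ≠ 0 ∧ S u = lam • u} := by
    refine ⟨Ms, ?_⟩
    rintro lam ⟨hl0, u, hu, hune, hueq⟩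
    refine hEig_le lam u hu hune hueq (fun _ => 1) Ms (fun _ => one_pos) (fun i => ?_)
    simpa using hMs i
  -- contractivity implies sub-eigenvector inequality
  have hSvc_of : ∀ (v : Fin N → ℝ) (c : ℝ), (∀ i, 0 < v i) →
      (∀ x : Fin N → ℝ, (∀ i, 0 ≤ x i) → ∀ ε : ℝ, 0 < ε →
        ∀ i : Fin N, T (x + ε • v) i ≤ T x i + c * ε * v i) →
      ∀ i, S v i ≤ c * v i := by
    intro v c hv hcon i
    have hlim : Tendsto (fun t : ℝ => t⁻¹ * T 0 i + c * v i) atTop (𝓝 (0 * T 0 i + c * v i)) :=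
      (tendsto_inv_atTop_zero.mul_const (T 0 i)).add tendsto_const_nhds
    rw [zero_mul, zero_add] at hlim
    refine le_of_tendsto_of_tendsto (hSi v (fun k => (hv k).le) i) hlim ?_
    filter_upwards [eventually_gt_atTop (0:ℝ)] with t ht
    have h := hcon 0 (fun k => le_refl 0) t ht i
    rw [zero_add] at h
    have h0 : (0:ℝ) ≤ t⁻¹ := by positivity
    calc t⁻¹ * T (t • v) i ≤ t⁻¹ * (T 0 i + c * t * v i) := mul_le_mul_of_nonneg_left h h0
      _ = t⁻¹ * T 0 i + (t⁻¹ * t) * (c * v i) := by ring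
      _ = t⁻¹ * T 0 i + c * v i := by rw [inv_mul_cancel₀ (ne_of_gt ht)]; ring
  -- existence of eigenpairs for the perturbed map
  have eigen : ∀ δ : ℝ, 0 < δ → δ ≤ 1 → ∃ (u : Fin N → ℝ) (lam : ℝ),
      (∀ i, 0 < u i) ∧ (∑ i, u i = 1) ∧ 0 < lam ∧ (∀ i, S u i + δ = lam * u i) := by
    intro δ hδ hδ1
    have hMδ : (0:ℝ) < Ms + δ := by linarith
    set τ : ℝ := δ / (Ms + δ) with hτdef
    have hτ0 : 0 < τ := div_pos hδ hMδ
    have hτ1 : τ ≤ 1 := by rw [div_le_one hMδ]; linarith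
    have hτδ : τ * (Ms + δ) = δ := div_mul_cancel₀ _ (ne_of_gt hMδ)
    have hN0 : (0:ℝ) < N := by
      have : (1:ℝ) ≤ (N:ℝ) := by exact_mod_cast hN
      linarith
    -- the iteration
    set G : (Fin N → ℝ) → (Fin N → ℝ) :=
      fun z => (∑ j, (S z j + δ))⁻¹ • (fun i => S z i + δ) with hG
    set x : ℕ → Fin N → ℝ := fun k => G^[k] (fun _ => (N:ℝ)⁻¹) with hxdef
    have hx0 : x 0 = fun _ => (N:ℝ)⁻¹ := rfl
    have hxs : ∀ k, x (k+1) = G (x k) := by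
      intro k
      rw [hxdef]
      exact Function.iterate_succ_apply' G k _
    -- invariant
    have hGpos : ∀ z : Fin N → ℝ, (∀ i, 0 < z i) → (∑ i, z i = 1) →
        (∀ i, 0 < G z i) ∧ (∑ i, G z i = 1) := by
      intro z hz hzs
      have hz0 : ∀ i, 0 ≤ z i := fun i => (hz i).le
      have hfz : ∀ i, 0 < S z i + δ := fun i => by
        have := hSnn z hz0 i; linarith
      have hσpos : 0 < ∑ j, (S z j + δ) :=
        Finset.sum_pos (fun j _ => hfz j) hne
      constructor
      · intro i
        have hGz : G z i = (∑ j, (S z j + δ))⁻¹ * (S z i + δ) := rfl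
        rw [hGz]
        exact mul_pos (inv_pos.mpr hσpos) (hfz i)
      · have : (∑ i, G z i) = (∑ j, (S z j + δ))⁻¹ * (∑ i, (S z i + δ)) := by
          rw [Finset.mul_sum]; rfl
        rw [this, inv_mul_cancel₀ (ne_of_gt hσpos)]
    have hinv : ∀ k, (∀ i, 0 < x k i) ∧ (∑ i, x k i = 1) := by
      intro k
      induction k with
      | zero =>
        constructor
        · intro i; rw [hx0]; positivity
        · rw [hx0, Finset.sum_const, Finset.card_univ, Fintype.card_fin, nsmul_eq_mul]
          field_simp
      | succ k ih =>
        rw [hxs k]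
        exact hGpos (x k) ih.1 ih.2
    have hxpos : ∀ k i, 0 < x k i := fun k => (hinv k).1
    have hxsum : ∀ k, (∑ i, x k i) = 1 := fun k => (hinv k).2
    have hxub : ∀ k i, x k i ≤ 1 := by
      intro k i
      calc x k i ≤ ∑ j, x k j :=
            Finset.single_le_sum (fun j _ => (hxpos k j).le) (Finset.mem_univ i)
        _ = 1 := hxsum k
    have hSb : ∀ k i, S (x k) i ≤ Ms := by
      intro k i
      have := hSmono (x k) (fun _ => 1) (fun j => (hxpos k j).le) hone (fun j => hxub k j) i
      exact le_trans this (hMs i)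
    have hS0 : ∀ k i, 0 ≤ S (x k) i := fun k i => hSnn (x k) (fun j => (hxpos k j).le) i
    have hσb : ∀ k, (∑ j, (S (x k) j + δ)) ≤ Ms + N * δ := by
      intro k
      rw [Finset.sum_add_distrib, Finset.sum_const, Finset.card_univ, Fintype.card_fin,
        nsmul_eq_mul]
      have : ∑ j, S (x k) j ≤ Ms := by
        rw [hMsdef]
        exact Finset.sum_le_sum (fun j _ =>
          hSmono (x k) (fun _ => 1) (fun i => (hxpos k i).le) hone (fun i => hxub k i) j)
      linarith
    have hσpos : ∀ k, 0 < ∑ j, (S (x k) j + δ) := by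
      intro k
      refine Finset.sum_pos (fun j _ => ?_) hne
      have := hS0 k j; linarith
    have hit : ∀ k i, x (k+1) i = (∑ j, (S (x k) j + δ))⁻¹ * (S (x k) i + δ) := by
      intro k i
      rw [hxs k]; rfl
    clear_value x
    clear hGpos hxs hxdef hG G
    -- the ratio sequences
    obtain ⟨b, hbdef⟩ : ∃ b : ℕ → ℝ,
        ∀ k, b k = Finset.univ.sup' hne (fun i => x (k+1) i / x k i) := ⟨_, fun _ => rfl⟩
    obtain ⟨a, hadef⟩ : ∃ a : ℕ → ℝ,
        ∀ k, a k = Finset.univ.inf' hne (fun i => x (k+1) i / x k i) := ⟨_, fun _ => rfl⟩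
    have ha0 : ∀ k, 0 < a k := by
      intro k
      rw [hadef k, Finset.lt_inf'_iff]
      exact fun i _ => div_pos (hxpos (k+1) i) (hxpos k i)
    have hab : ∀ k, a k ≤ b k := by
      intro k
      obtain ⟨i, hi⟩ := hne
      rw [hadef k, hbdef k]
      exact le_trans (Finset.inf'_le _ hi) (Finset.le_sup' (f := fun i => x (k+1) i / x k i) hi)
    have hbK : ∀ k i, x (k+1) i ≤ b k * x k i := by
      intro k i
      have h := Finset.le_sup' (fun i => x (k+1) i / x k i) (Finset.mem_univ i)
      rw [← hbdef k] at h
      exact (div_le_iff₀ (hxpos k i)).mp h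
    have haK : ∀ k i, a k * x k i ≤ x (k+1) i := by
      intro k i
      have h := Finset.inf'_le (fun i => x (k+1) i / x k i) (Finset.mem_univ i)
      rw [← hadef k] at h
      exact (le_div_iff₀ (hxpos k i)).mp h
    have ha1 : ∀ k, a k ≤ 1 := by
      intro k
      by_contra hcon
      push_neg at hcon
      have hstrict : ∀ i ∈ Finset.univ, x k i < x (k+1) i := by
        intro i _
        have h1 := haK k i
        nlinarith [hxpos k i]
      have := Finset.sum_lt_sum_of_nonempty hne hstrict
      rw [hxsum k, hxsum (k+1)] at this
      exact lt_irrefl _ this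
    have hb1 : ∀ k, 1 ≤ b k := by
      intro k
      by_contra hcon
      push_neg at hcon
      have hstrict : ∀ i ∈ Finset.univ, x (k+1) i < x k i := by
        intro i _
        have h1 := hbK k i
        nlinarith [hxpos k i]
      have := Finset.sum_lt_sum_of_nonempty hne hstrict
      rw [hxsum k, hxsum (k+1)] at this
      exact lt_irrefl _ this
    -- scalar core inequalities
    have hkeyU : ∀ s β : ℝ, 0 ≤ s → s ≤ Ms → 1 ≤ β →
        β * s + δ ≤ ((1-τ)*β + τ) * (s + δ) := by
      intro s β hs0 hsMs hβ
      have h1 : 0 ≤ τ * (β - 1) * (Ms - s) :=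
        mul_nonneg (mul_nonneg hτ0.le (by linarith)) (by linarith)
      have e1 : β * (τ * (Ms + δ)) = β * δ := by rw [hτδ]
      nlinarith [h1, e1, hτδ]
    have hkeyL : ∀ s α : ℝ, 0 ≤ s → s ≤ Ms → 0 ≤ α → α ≤ 1 →
        ((1-τ)*α + τ) * (s + δ) ≤ α * s + δ := by
      intro s α hs0 hsMs hα0 hα1
      have h1 : 0 ≤ τ * (1 - α) * (Ms - s) :=
        mul_nonneg (mul_nonneg hτ0.le (by linarith)) (by linarith)
      have e1 : α * (τ * (Ms + δ)) = α * δ := by rw [hτδ]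
      nlinarith [h1, e1, hτδ]
    -- core coordinatewise comparison
    have core : ∀ k i,
        ((1-τ)*a k + τ) * (S (x k) i + δ) ≤ S (x (k+1)) i + δ ∧
        S (x (k+1)) i + δ ≤ ((1-τ)*b k + τ) * (S (x k) i + δ) := by
      intro k i
      have hb0 : 0 < b k := lt_of_lt_of_le one_pos (hb1 k)
      have hupper : S (x (k+1)) i ≤ b k * S (x k) i := by
        have hsmul : ∀ j, 0 ≤ (b k • x k) j := fun j => by
          simpa using mul_nonneg hb0.le (hxpos k j).le
        have h := hSmono (x (k+1)) (b k • x k) (fun j => (hxpos (k+1) j).le) hsmul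
          (fun j => by simpa using hbK k j) i
        rw [hShom (b k) hb0 (x k) (fun j => (hxpos k j).le)] at h
        simpa using h
      have hlower : a k * S (x k) i ≤ S (x (k+1)) i := by
        have hsmul : ∀ j, 0 ≤ (a k • x k) j := fun j => by
          simpa using mul_nonneg (ha0 k).le (hxpos k j).le
        have h := hSmono (a k • x k) (x (k+1)) hsmul (fun j => (hxpos (k+1) j).le)
          (fun j => by simpa using haK k j) i
        rw [hShom (a k) (ha0 k) (x k) (fun j => (hxpos k j).le)] at h
        simpa using h
      constructor
      · have := hkeyL (S (x k) i) (a k) (hS0 k i) (hSb k i) (ha0 k).le (ha1 k)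
        linarith
      · have := hkeyU (S (x k) i) (b k) (hS0 k i) (hSb k i) (hb1 k)
        linarith
    -- ratio contraction
    have hstep : ∀ k, b (k+1) / a (k+1) - 1 ≤ (1-τ) * (b k / a k - 1) := by
      intro k
      obtain ⟨s1, hs1def⟩ : ∃ s1 : ℝ, s1 = ∑ j, (S (x k) j + δ) := ⟨_, rfl⟩
      obtain ⟨s2, hs2def⟩ : ∃ s2 : ℝ, s2 = ∑ j, (S (x (k+1)) j + δ) := ⟨_, rfl⟩
      have hs1 : 0 < s1 := hs1def ▸ hσpos k
      have hs2 : 0 < s2 := hs2def ▸ hσpos (k+1)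
      have hit1 : ∀ i, x (k+1) i = s1⁻¹ * (S (x k) i + δ) := by
        intro i; rw [hs1def]; exact hit k i
      have hit2 : ∀ i, x (k+2) i = s2⁻¹ * (S (x (k+1)) i + δ) := by
        intro i; rw [hs2def]; exact hit (k+1) i
      have hs12 : 0 < s1 / s2 := div_pos hs1 hs2
      obtain ⟨A, hAdef⟩ : ∃ A : ℝ, A = (1-τ)*a k + τ := ⟨_, rfl⟩
      obtain ⟨B, hBdef⟩ : ∃ B : ℝ, B = (1-τ)*b k + τ := ⟨_, rfl⟩
      have hA0 : 0 < A := by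
        rw [hAdef]
        have h1 := ha0 k
        nlinarith [hτ0, hτ1]
      have hB0 : 0 < B := by
        rw [hBdef]
        have h1 := hb1 k
        nlinarith [hτ0, hτ1]
      have hAa : a k ≤ A := by
        rw [hAdef]
        have h1 := ha1 k
        nlinarith [hτ0, ha0 k]
      have hup : ∀ i, x (k+2) i ≤ ((s1/s2) * B) * x (k+1) i := by
        intro i
        rw [hit2 i, hit1 i]
        have hcore := (core k i).2
        calc s2⁻¹ * (S (x (k+1)) i + δ) ≤ s2⁻¹ * (B * (S (x k) i + δ)) := by
              apply mul_le_mul_of_nonneg_left _ (inv_nonneg.mpr hs2.le)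
              rw [hBdef]
              exact hcore
          _ = ((s1/s2) * B) * (s1⁻¹ * (S (x k) i + δ)) := by
              field_simp
      have hlo : ∀ i, ((s1/s2) * A) * x (k+1) i ≤ x (k+2) i := by
        intro i
        rw [hit2 i, hit1 i]
        have hcore := (core k i).1
        calc ((s1/s2) * A) * (s1⁻¹ * (S (x k) i + δ))
            = s2⁻¹ * (A * (S (x k) i + δ)) := by
              field_simp
          _ ≤ s2⁻¹ * (S (x (k+1)) i + δ) := by
              apply mul_le_mul_of_nonneg_left _ (inv_nonneg.mpr hs2.le)
              rw [hAdef]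
              exact hcore
      have hb' : b (k+1) ≤ (s1/s2) * B := by
        rw [hbdef (k+1)]
        refine Finset.sup'_le _ _ (fun i _ => ?_)
        rw [div_le_iff₀ (hxpos (k+1) i)]
        exact hup i
      have ha' : (s1/s2) * A ≤ a (k+1) := by
        rw [hadef (k+1)]
        refine Finset.le_inf' _ _ (fun i _ => ?_)
        rw [le_div_iff₀ (hxpos (k+1) i)]
        exact hlo i
      have hq : b (k+1) / a (k+1) ≤ B / A := by
        have h1 : b (k+1) / a (k+1) ≤ ((s1/s2) * B) / ((s1/s2) * A) :=
          div_le_div₀ (mul_nonneg hs12.le hB0.le) hb' (mul_pos hs12 hA0) ha'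
        have h2 : ((s1/s2) * B) / ((s1/s2) * A) = B / A :=
          mul_div_mul_left _ _ (ne_of_gt hs12)
        rw [h2] at h1
        exact h1
      have hfinal : B / A - 1 ≤ (1-τ) * (b k / a k - 1) := by
        have e0 : B - A = (1-τ) * (b k - a k) := by rw [hAdef, hBdef]; ring
        have e1 : B / A - 1 = (1-τ) * (b k - a k) / A := by
          rw [← e0, sub_div, div_self (ne_of_gt hA0)]
        have e2' : b k / a k - 1 = (b k - a k) / a k := by
          rw [sub_div, div_self (ne_of_gt (ha0 k))]
        have e2 : (1-τ) * (b k / a k - 1) = (1-τ) * (b k - a k) / a k := by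
          rw [e2', mul_div_assoc]
        rw [e1, e2]
        have hnum : 0 ≤ (1-τ) * (b k - a k) :=
          mul_nonneg (by linarith) (by linarith [hab k])
        exact div_le_div_of_nonneg_left hnum (ha0 k) hAa
      linarith [hq, hfinal]
    -- geometric decay of the oscillation
    have hτlt : 1 - τ < 1 := by linarith
    have hτnn : 0 ≤ 1 - τ := by linarith
    have hqk : ∀ k, 0 ≤ b k / a k - 1 := by
      intro k
      have h := (one_le_div (ha0 k)).mpr (hab k)
      linarith
    have hgeo : ∀ k, b k / a k - 1 ≤ (b 0 / a 0 - 1) * (1-τ)^k := by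
      intro k
      induction k with
      | zero => simp
      | succ k ih =>
        calc b (k+1) / a (k+1) - 1 ≤ (1-τ) * (b k / a k - 1) := hstep k
          _ ≤ (1-τ) * ((b 0 / a 0 - 1) * (1-τ)^k) := mul_le_mul_of_nonneg_left ih hτnn
          _ = (b 0 / a 0 - 1) * (1-τ)^(k+1) := by ring
    have hdistb : ∀ k, dist (x k) (x (k+1)) ≤ (b 0 / a 0 - 1) * (1-τ)^k := by
      intro k
      have hCk : 0 ≤ (b 0 / a 0 - 1) * (1-τ)^k := mul_nonneg (hqk 0) (pow_nonneg hτnn k)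
      rw [dist_pi_le_iff hCk]
      intro i
      rw [Real.dist_eq, abs_le]
      have h1 := haK k i
      have h2 := hbK k i
      have hx1 := hxpos k i
      have hxu := hxub k i
      have he : (b k / a k) * a k = b k := div_mul_cancel₀ _ (ne_of_gt (ha0 k))
      have hba : b k - a k ≤ b k / a k - 1 := by
        nlinarith [he, hqk k, ha1 k, mul_nonneg (hqk k) (sub_nonneg.mpr (ha1 k))]
      have hgk := hgeo k
      constructor
      · nlinarith [hb1 k, ha1 k, hab k,
          mul_nonneg (sub_nonneg.mpr (hab k)) (sub_nonneg.mpr hxu)]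
      · nlinarith [hb1 k, ha1 k, hab k,
          mul_nonneg (sub_nonneg.mpr (hab k)) (sub_nonneg.mpr hxu)]
    have hcauchy : CauchySeq x :=
      cauchySeq_of_le_geometric (1-τ) (b 0 / a 0 - 1) hτlt hdistb
    obtain ⟨u, hu⟩ := cauchySeq_tendsto_of_complete hcauchy
    have hui : ∀ i, Tendsto (fun k => x k i) atTop (𝓝 (u i)) := fun i =>
      tendsto_pi_nhds.mp hu i
    -- uniform positive lower bound
    obtain ⟨κ, hκdef⟩ : ∃ κ : ℝ, κ = δ / (Ms + N * δ) := ⟨_, rfl⟩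
    have hMNδ : 0 < Ms + N * δ := by nlinarith [hN0]
    have hκ0 : 0 < κ := by rw [hκdef]; exact div_pos hδ hMNδ
    have hκx : ∀ k i, κ ≤ x k i := by
      intro k i
      cases k with
      | zero =>
        have : x 0 i = (N:ℝ)⁻¹ := by rw [hx0]
        rw [this, hκdef, ← one_div]
        rw [div_le_div_iff₀ hMNδ hN0]
        nlinarith [hMs0]
      | succ k =>
        rw [hit k i, hκdef]
        have h1 := hσb k
        have h2 := hσpos k
        have h3 := hS0 k i
        have hinvle : (Ms + N*δ)⁻¹ ≤ (∑ j, (S (x k) j + δ))⁻¹ :=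
          inv_anti₀ h2 h1
        calc δ/(Ms+N*δ) = (Ms+N*δ)⁻¹ * δ := by rw [div_eq_mul_inv, mul_comm]
          _ ≤ (∑ j, (S (x k) j + δ))⁻¹ * (S (x k) i + δ) :=
              mul_le_mul hinvle (by linarith) hδ.le (inv_nonneg.mpr h2.le)
    have hupos : ∀ i, 0 < u i := fun i =>
      lt_of_lt_of_le hκ0 (ge_of_tendsto' (hui i) (fun k => hκx k i))
    have hu0 : ∀ i, 0 ≤ u i := fun i => (hupos i).le
    have hsumu : (∑ i, u i) = 1 := by
      have hs : Tendsto (fun k => ∑ i, x k i) atTop (𝓝 (∑ i, u i)) :=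
        tendsto_finset_sum _ (fun i _ => hui i)
      have hs' : Tendsto (fun _ : ℕ => (1:ℝ)) atTop (𝓝 (∑ i, u i)) :=
        hs.congr (fun k => hxsum k)
      exact tendsto_nhds_unique hs' tendsto_const_nhds
    -- S is continuous along the sequence
    have hdistu : Tendsto (fun k => dist (x k) u) atTop (𝓝 0) := by
      rw [← tendsto_iff_dist_tendsto_zero]
      exact hu
    have hSconv : ∀ i, Tendsto (fun k => S (x k) i) atTop (𝓝 (S u i)) := by
      intro i
      rw [tendsto_iff_dist_tendsto_zero]
      have hbnd : ∀ k, dist (S (x k) i) (S u i) ≤ dist (x k) u * S (fun _ => 1) i := by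
        intro k
        have hd0 : (0:ℝ) ≤ dist (x k) u := dist_nonneg
        have hc1 : ∀ j, x k j ≤ u j + dist (x k) u := by
          intro j
          have h := dist_le_pi_dist (x k) u j
          rw [Real.dist_eq] at h
          have := abs_le.mp h
          linarith [this.2]
        have hc2 : ∀ j, u j ≤ x k j + dist (x k) u := by
          intro j
          have h := dist_le_pi_dist (x k) u j
          rw [Real.dist_eq] at h
          have := abs_le.mp h
          linarith [this.1]
        have hL1 := hLip (x k) u (fun j => (hxpos k j).le) hu0 _ hd0 hc1 i
        have hL2 := hLip u (x k) hu0 (fun j => (hxpos k j).le) _ hd0 hc2 i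
        rw [Real.dist_eq, abs_le]
        constructor <;> linarith
      refine squeeze_zero (fun k => dist_nonneg) hbnd ?_
      simpa using hdistu.mul_const (S (fun _ : Fin N => (1:ℝ)) i)
    have hσconv : Tendsto (fun k => ∑ j, (S (x k) j + δ)) atTop
        (𝓝 (∑ j, (S u j + δ))) :=
      tendsto_finset_sum _ (fun j _ => (hSconv j).add tendsto_const_nhds)
    have hlampos : 0 < ∑ j, (S u j + δ) := by
      refine Finset.sum_pos (fun j _ => ?_) hne
      have := hSnn u hu0 j
      linarith
    have hfix : ∀ i, S u i + δ = (∑ j, (S u j + δ)) * u i := by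
      intro i
      have hL : Tendsto (fun k => x (k+1) i) atTop (𝓝 (u i)) := by
        have h := (hui i).comp (tendsto_add_atTop_nat 1)
        exact h
      have hR : Tendsto (fun k => (∑ j, (S (x k) j + δ))⁻¹ * (S (x k) i + δ)) atTop
          (𝓝 ((∑ j, (S u j + δ))⁻¹ * (S u i + δ))) :=
        (hσconv.inv₀ (ne_of_gt hlampos)).mul ((hSconv i).add tendsto_const_nhds)
      have hRx : Tendsto (fun k => x (k+1) i) atTop
          (𝓝 ((∑ j, (S u j + δ))⁻¹ * (S u i + δ))) :=
        hR.congr (fun k => (hit k i).symm)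
      have huieq : u i = (∑ j, (S u j + δ))⁻¹ * (S u i + δ) :=
        tendsto_nhds_unique hL hRx
      rw [huieq, ← mul_assoc, mul_inv_cancel₀ (ne_of_gt hlampos), one_mul]
    exact ⟨u, ∑ j, (S u j + δ), hupos, hsumu, hlampos, hfix⟩
  refine ⟨part1, ?_, ?_⟩
  · -- forward
    rintro ⟨v, c, hv, hc0, hc1, hcon⟩
    have hc := hSvc_of v c hv hcon
    have hle : sSup {lam : ℝ | 0 ≤ lam ∧
        ∃ u : Fin N → ℝ, (∀ i, 0 ≤ u i) ∧ u ≠ 0 ∧ S u = lam • u} ≤ c := by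
      refine Real.sSup_le ?_ hc0
      rintro lam ⟨hl0, u, hu, hune, hueq⟩
      exact hEig_le lam u hu hune hueq v c hv hc
    linarith
  · -- backward
    intro hsup
    have key : ∃ (v : Fin N → ℝ) (c : ℝ), (∀ i, 0 < v i) ∧ 0 ≤ c ∧ c < 1 ∧
        ∀ i, S v i ≤ c * v i := by
      by_contra hno
      push_neg at hno
      have hex : ∀ n : ℕ, ∃ (u : Fin N → ℝ) (lam : ℝ), (∀ i, 0 < u i) ∧ (∑ i, u i = 1) ∧
          1 ≤ lam ∧ (∀ i, S u i + 1/((n:ℝ)+1) = lam * u i) := by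
        intro n
        have hδ : (0:ℝ) < 1/((n:ℝ)+1) := by positivity
        have hδ1 : (1:ℝ)/((n:ℝ)+1) ≤ 1 := by
          rw [div_le_one (by positivity)]
          have : (0:ℝ) ≤ (n:ℝ) := Nat.cast_nonneg n
          linarith
        obtain ⟨u, lam, h1, h2, h3, h4⟩ := eigen (1/((n:ℝ)+1)) hδ hδ1
        refine ⟨u, lam, h1, h2, ?_, h4⟩
        by_contra hlam
        push_neg at hlam
        obtain ⟨i, hi⟩ := hno u lam h1 h3.le hlam
        have hle : S u i ≤ lam * u i := by
          have := h4 i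
          linarith
        exact absurd hle (not_le.mpr hi)
      choose uu ll hupos husum hlam1 heqq using hex
      have hub : ∀ n i, uu n i ≤ 1 := by
        intro n i
        calc uu n i ≤ ∑ j, uu n j :=
              Finset.single_le_sum (fun j _ => (hupos n j).le) (Finset.mem_univ i)
          _ = 1 := husum n
      set CC : Set ((Fin N → ℝ) × ℝ) :=
        (Set.univ.pi fun _ : Fin N => Set.Icc (0:ℝ) 1) ×ˢ Set.Icc 1 (Ms + N) with hCC
      have hCCcomp : IsCompact CC :=
        (isCompact_univ_pi fun _ => isCompact_Icc).prod isCompact_Icc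
      have hmemCC : ∀ n : ℕ, (uu n, ll n) ∈ CC := by
        intro n
        refine ⟨fun i _ => ⟨(hupos n i).le, hub n i⟩, hlam1 n, ?_⟩
        have hSle : ∀ i, S (uu n) i ≤ S (fun _ => 1) i := fun i =>
          hSmono (uu n) _ (fun j => (hupos n j).le) hone (fun j => hub n j) i
        have h1 : ∑ i, (S (uu n) i + 1/((n:ℝ)+1)) = ll n := by
          calc ∑ i, (S (uu n) i + 1/((n:ℝ)+1)) = ∑ i, ll n * uu n i :=
                Finset.sum_congr rfl (fun i _ => heqq n i)
            _ = ll n * ∑ i, uu n i := by rw [Finset.mul_sum]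
            _ = ll n := by rw [husum n]; ring
        have h2 : ∑ i, (S (uu n) i + 1/((n:ℝ)+1)) ≤ Ms + N := by
          rw [Finset.sum_add_distrib]
          have hA : ∑ i, S (uu n) i ≤ Ms := by
            rw [hMsdef]
            exact Finset.sum_le_sum (fun i _ => hSle i)
          have hB : (∑ _i : Fin N, (1:ℝ)/((n:ℝ)+1)) ≤ (N:ℝ) := by
            rw [Finset.sum_const, Finset.card_univ, Fintype.card_fin, nsmul_eq_mul]
            have hδ1 : (1:ℝ)/((n:ℝ)+1) ≤ 1 := by
              rw [div_le_one (by positivity)]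
              have : (0:ℝ) ≤ (n:ℝ) := Nat.cast_nonneg n
              linarith
            have hN0 : (0:ℝ) ≤ (N:ℝ) := Nat.cast_nonneg N
            nlinarith
          linarith
        linarith
      obtain ⟨⟨uI, lamI⟩, hmemI, φ, hφ, hconv⟩ := hCCcomp.tendsto_subseq hmemCC
      have hu1 : Tendsto (fun n => uu (φ n)) atTop (𝓝 uI) := by
        have := (continuous_fst.tendsto (uI, lamI)).comp hconv
        exact this
      have hl1 : Tendsto (fun n => ll (φ n)) atTop (𝓝 lamI) := by
        have := (continuous_snd.tendsto (uI, lamI)).comp hconv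
        exact this
      have hui : ∀ i, Tendsto (fun n => uu (φ n) i) atTop (𝓝 (uI i)) := fun i =>
        tendsto_pi_nhds.mp hu1 i
      have hu0I : ∀ i, 0 ≤ uI i := by
        intro i
        have := hmemI.1 i (Set.mem_univ i)
        exact this.1
      have hδ0 : Tendsto (fun n : ℕ => 1/((φ n : ℝ)+1)) atTop (𝓝 0) := by
        have h := tendsto_one_div_add_atTop_nhds_zero_nat (𝕜 := ℝ)
        exact h.comp hφ.tendsto_atTop
      have hdist : Tendsto (fun n => dist (uu (φ n)) uI) atTop (𝓝 0) := by
        rw [← tendsto_iff_dist_tendsto_zero]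
        exact hu1
      have hSconv : ∀ i, Tendsto (fun n => S (uu (φ n)) i) atTop (𝓝 (S uI i)) := by
        intro i
        rw [tendsto_iff_dist_tendsto_zero]
        have hbnd : ∀ n, dist (S (uu (φ n)) i) (S uI i) ≤
            dist (uu (φ n)) uI * S (fun _ => 1) i := by
          intro n
          set d := dist (uu (φ n)) uI with hd
          have hd0 : 0 ≤ d := dist_nonneg
          have hcoord : ∀ j, dist (uu (φ n) j) (uI j) ≤ d := fun j =>
            dist_le_pi_dist (uu (φ n)) uI j
          have hc1 : ∀ j, uu (φ n) j ≤ uI j + d := by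
            intro j
            have := hcoord j
            rw [Real.dist_eq] at this
            have := abs_le.mp this
            linarith [this.2]
          have hc2 : ∀ j, uI j ≤ uu (φ n) j + d := by
            intro j
            have := hcoord j
            rw [Real.dist_eq] at this
            have := abs_le.mp this
            linarith [this.1]
          have hL1 := hLip (uu (φ n)) uI (fun j => (hupos (φ n) j).le) hu0I d hd0 hc1 i
          have hL2 := hLip uI (uu (φ n)) hu0I (fun j => (hupos (φ n) j).le) d hd0 hc2 i
          rw [Real.dist_eq, abs_le]
          constructor <;> linarith
        refine squeeze_zero (fun n => dist_nonneg) hbnd ?_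
        simpa using hdist.mul_const (S (fun _ : Fin N => (1:ℝ)) i)
      have heqI : ∀ i, S uI i = lamI * uI i := by
        intro i
        have hL : Tendsto (fun n => S (uu (φ n)) i + 1/((φ n : ℝ)+1)) atTop
            (𝓝 (S uI i + 0)) := (hSconv i).add hδ0
        have hR : Tendsto (fun n => ll (φ n) * uu (φ n) i) atTop (𝓝 (lamI * uI i)) :=
          hl1.mul (hui i)
        have hLL : Tendsto (fun n => ll (φ n) * uu (φ n) i) atTop (𝓝 (S uI i + 0)) :=
          hL.congr (fun n => heqq (φ n) i)
        have := tendsto_nhds_unique hLL hR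
        linarith
      have hsumI : (∑ i, uI i) = 1 := by
        have hs : Tendsto (fun n => ∑ i, uu (φ n) i) atTop (𝓝 (∑ i, uI i)) :=
          tendsto_finset_sum _ (fun i _ => hui i)
        have hs' : Tendsto (fun _ : ℕ => (1:ℝ)) atTop (𝓝 (∑ i, uI i)) :=
          hs.congr (fun n => husum (φ n))
        exact tendsto_nhds_unique hs' tendsto_const_nhds
      have hne0 : uI ≠ 0 := by
        intro h0
        rw [h0] at hsumI
        simp at hsumI
      have hlamI1 : (1:ℝ) ≤ lamI := hmemI.2.1
      have hmemE : lamI ∈ {lam : ℝ | 0 ≤ lam ∧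
          ∃ u : Fin N → ℝ, (∀ i, 0 ≤ u i) ∧ u ≠ 0 ∧ S u = lam • u} := by
        refine ⟨by linarith, uI, hu0I, hne0, ?_⟩
        funext i
        simpa using heqI i
      have := le_csSup hEbdd hmemE
      linarith
    obtain ⟨v, c, hv, hc0, hc1, hvc⟩ := key
    refine ⟨v, c, hv, hc0, hc1, ?_⟩
    intro x hx ε hε i
    have h1 := hrec x (ε • v) hx (hsm ε hε.le v (fun k => (hv k).le)) i
    have h2 : S (ε • v) i = ε * S v i := by
      rw [hShom ε hε v (fun k => (hv k).le)]; simp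
    have h3 : ε * S v i ≤ ε * (c * v i) := mul_le_mul_of_nonneg_left (hvc i) hε.le
    calc T (x + ε • v) i ≤ T x i + S (ε • v) i := h1
      _ = T x i + ε * S v i := by rw [h2]
      _ ≤ T x i + ε * (c * v i) := by linarith
      _ = T x i + c * ε * v i := by ring
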